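/- arXiv:1702.00205 — 4 statements merged into one kernel-verified Lean document; each statement's English description precedes it below -/
import Mathlib

section
/- Let G be a finite undirected weighted graph without loops, and let a, b : V(G) → ℝ≥0 satisfy d_G(x) ≥ a(x) + b(x) + 2·W_G(x) for every vertex x ∈ V(G). If there exists a stable pair, i.e. disjoint nonempty subsets A, B ⊆ V(G) with d_A(x) ≥ a(x) for every x ∈ A and d_B(x) ≥ b(x) for every x ∈ B, then there exists a stable partition of V(G), i.e. a partition (A', B') of V(G) into two nonempty sets with A' ∪ B' = V(G), d_{A'}(x) ≥ a(x) for every x ∈ A', and d_{B'}(x) ≥ b(x) for every x ∈ B'. -/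
/-- Degree of vertex `x` with respect to the vertex subset `X`:
the sum of weights of edges from `x` to vertices of `X`. -/
def deg {V : Type*} (w : V → V → ℝ) (X : Finset V) (x : V) : ℝ :=
  ∑ y ∈ X, w x y

/-- `maxW w x` is the maximum weight of an edge of the graph incident to `x`,
loops excluded, i.e. the maximum of `w x y` over all `y ≠ x`. -/
noncomputable def maxW {V : Type*} [Fintype V] [DecidableEq V] [Nontrivial V]
    (w : V → V → ℝ) (x : V) : ℝ :=
  (Finset.univ.erase x).sup'
    (by obtain ⟨y, hy⟩ := exists_ne x
        exact ⟨y, Finset.mem_erase.mpr ⟨hy, Finset.mem_univ y⟩⟩)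
    (w x)

/-- Proposition 1: if there exists a stable pair, then there exists a stable
partition of `V(G)`, too. -/
theorem stable_pair_to_stable_partition
    {V : Type*} [Fintype V] [DecidableEq V] [Nontrivial V]
    (w : V → V → ℝ)
    (hsymm : ∀ x y, w x y = w y x)
    (hnonneg : ∀ x y, 0 ≤ w x y)
    (hloop : ∀ x, w x x = 0)
    (a b : V → ℝ)
    (ha : ∀ x, 0 ≤ a x) (hb : ∀ x, 0 ≤ b x)
    (hdeg : ∀ x, a x + b x + 2 * maxW w x ≤ deg w Finset.univ x)
    (A B : Finset V)
    (hA : A.Nonempty) (hB : B.Nonempty) (hAB : Disjoint A B)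
    (hstA : ∀ x ∈ A, a x ≤ deg w A x)
    (hstB : ∀ x ∈ B, b x ≤ deg w B x) :
    ∃ A' B' : Finset V, A'.Nonempty ∧ B'.Nonempty ∧ Disjoint A' B' ∧
      A' ∪ B' = Finset.univ ∧
      (∀ x ∈ A', a x ≤ deg w A' x) ∧ (∀ x ∈ B', b x ≤ deg w B' x) := by
  classical
  -- basic facts
  have hmaxW : ∀ x : V, 0 ≤ maxW w x := by
    intro x
    obtain ⟨y, hy⟩ := exists_ne x
    exact le_trans (hnonneg x y)
      (Finset.le_sup' _ (Finset.mem_erase.mpr ⟨hy, Finset.mem_univ y⟩))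
  have hmono : ∀ (X Y : Finset V) (x : V), X ⊆ Y → deg w X x ≤ deg w Y x := by
    intro X Y x hXY
    exact Finset.sum_le_sum_of_subset_of_nonneg hXY (fun y _ _ => hnonneg x y)
  have hins : ∀ (X : Finset V) (v x : V), v ∉ X →
      deg w (insert v X) x = w x v + deg w X x := by
    intro X v x hv
    simpa [deg] using Finset.sum_insert (f := w x) hv
  have hcompl : ∀ (X : Finset V) (x : V),
      deg w Xᶜ x = deg w Finset.univ x - deg w X x := by
    intro X x
    have := Finset.sum_add_sum_compl X (w x)
    simp only [deg]
    linarith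
  -- main induction
  have key : ∀ n (A B : Finset V), (Finset.univ \ (A ∪ B)).card ≤ n →
      A.Nonempty → B.Nonempty → Disjoint A B →
      (∀ x ∈ A, a x ≤ deg w A x) → (∀ x ∈ B, b x ≤ deg w B x) →
      ∃ A' B' : Finset V, A'.Nonempty ∧ B'.Nonempty ∧ Disjoint A' B' ∧
        A' ∪ B' = Finset.univ ∧
        (∀ x ∈ A', a x ≤ deg w A' x) ∧ (∀ x ∈ B', b x ≤ deg w B' x) := by
    intro n
    induction n with
    | zero =>
      intro A B hcard hA hB hAB hstA hstB
      refine ⟨A, B, hA, hB, hAB, ?_, hstA, hstB⟩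
      have : Finset.univ \ (A ∪ B) = ∅ := Finset.card_eq_zero.mp (Nat.le_zero.mp hcard)
      have hsub : (Finset.univ : Finset V) ⊆ A ∪ B := by
        intro x hx
        by_contra hxn
        have : x ∈ Finset.univ \ (A ∪ B) := Finset.mem_sdiff.mpr ⟨hx, hxn⟩
        simp [‹Finset.univ \ (A ∪ B) = ∅›] at this
      exact Finset.Subset.antisymm (Finset.subset_univ _) hsub
    | succ n ih =>
      intro A B hcard hA hB hAB hstA hstB
      by_cases hcover : A ∪ B = Finset.univ
      · exact ⟨A, B, hA, hB, hAB, hcover, hstA, hstB⟩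
      by_cases hex : ∃ v ∈ Finset.univ \ (A ∪ B), a v ≤ deg w A v ∨ b v ≤ deg w B v
      · obtain ⟨v, hv, hcase⟩ := hex
        obtain ⟨-, hvAB⟩ := Finset.mem_sdiff.mp hv
        have hvA : v ∉ A := fun h => hvAB (Finset.mem_union_left _ h)
        have hvB : v ∉ B := fun h => hvAB (Finset.mem_union_right _ h)
        cases hcase with
        | inl h =>
          have hcard' : (Finset.univ \ (insert v A ∪ B)).card ≤ n := by
            have : Finset.univ \ (insert v A ∪ B)
                = (Finset.univ \ (A ∪ B)).erase v := by
              rw [Finset.insert_union, Finset.sdiff_insert]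
            rw [this, Finset.card_erase_of_mem hv]
            omega
          refine ih (insert v A) B hcard' ⟨v, Finset.mem_insert_self v A⟩ hB ?_ ?_ hstB
          · rw [Finset.disjoint_insert_left]
            exact ⟨hvB, hAB⟩
          · intro x hx
            rcases Finset.mem_insert.mp hx with rfl | hxA
            · rw [hins A x x hvA, hloop]
              simpa using h
            · exact le_trans (hstA x hxA) (hmono _ _ _ (Finset.subset_insert v A))
        | inr h =>
          have hcard' : (Finset.univ \ (A ∪ insert v B)).card ≤ n := by
            have : Finset.univ \ (A ∪ insert v B)
                = (Finset.univ \ (A ∪ B)).erase v := by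
              rw [Finset.union_insert, Finset.sdiff_insert]
            rw [this, Finset.card_erase_of_mem hv]
            omega
          refine ih A (insert v B) hcard' hA ⟨v, Finset.mem_insert_self v B⟩ ?_ hstA ?_
          · rw [Finset.disjoint_insert_right]
            exact ⟨hvA, hAB⟩
          · intro x hx
            rcases Finset.mem_insert.mp hx with rfl | hxB
            · rw [hins B x x hvB, hloop]
              simpa using h
            · exact le_trans (hstB x hxB) (hmono _ _ _ (Finset.subset_insert v B))
      · -- every vertex outside A ∪ B fails both conditions; put them all in A
        push_neg at hex
        refine ⟨Bᶜ, B, ?_, hB, ?_, ?_, ?_, hstB⟩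
        · obtain ⟨x, hx⟩ := hA
          exact ⟨x, Finset.mem_compl.mpr (Finset.disjoint_left.mp hAB hx)⟩
        · exact disjoint_compl_left
        · rw [Finset.union_comm]; exact Finset.union_compl B
        · intro x hx
          have hxB : x ∉ B := Finset.mem_compl.mp hx
          by_cases hxA : x ∈ A
          · exact le_trans (hstA x hxA) (hmono _ _ _
              (fun y hy => Finset.mem_compl.mpr (Finset.disjoint_left.mp hAB hy)))
          · have hxR : x ∈ Finset.univ \ (A ∪ B) := by
              simp [hxA, hxB]
            have hbx := (hex x hxR).2
            have hdx := hdeg x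
            have hm := hmaxW x
            rw [hcompl]
            linarith
  exact key (Finset.univ \ (A ∪ B)).card A B le_rfl hA hB hAB hstA hstB
end

section
/- Let G be the complete graph on 9 vertices with all edge weights equal to 1 (so w(x,y) = 1 for all x ≠ y and w(x,x) = 0), and let ε > 0. Set a(x) = b(x) = 3 + ε for every vertex x. Then there is no partition (A, B) of the vertex set into two nonempty disjoint sets covering all vertices such that d_A(x) ≥ a(x) for every x ∈ A and d_B(x) ≥ b(x) for every x ∈ B. (Hence the bound d_G(x) ≥ a(x) + b(x) + 2·W_G(x) in the decomposition theorem is tight, since here d_G(x) = 8 = (3+ε) + (3+ε) + 2 − 2ε.) -/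
lemma deg_K9 {V : Type*} [DecidableEq V] (X : Finset V) (x : V) (hx : x ∈ X) :
    deg (fun x y => if x = y then (0:ℝ) else 1) X x = (X.card : ℝ) - 1 := by
  unfold deg
  have : ∀ y ∈ X, (if x = y then (0:ℝ) else 1) = 1 - (if x = y then 1 else 0) := by
    intro y _; split <;> ring
  rw [Finset.sum_congr rfl this, Finset.sum_sub_distrib, Finset.sum_ite_eq X x (fun _ => (1:ℝ)),
    if_pos hx]
  simp

lemma card_ge {V : Type*} [DecidableEq V] (ε : ℝ) (hε : 0 < ε) (X : Finset V)
    (hne : X.Nonempty)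
    (h : ∀ x ∈ X, (3 : ℝ) + ε ≤ deg (fun x y => if x = y then 0 else 1) X x) :
    5 ≤ X.card := by
  obtain ⟨x, hx⟩ := hne
  have := h x hx
  rw [deg_K9 X x hx] at this
  have h4 : (4 : ℝ) < (X.card : ℝ) := by linarith
  exact_mod_cast h4

/-- Tightness example: in `K₉` with unit edge weights (so `d_G(x) = 8` for every
vertex), setting `a(x) = b(x) = 3 + ε` with `ε > 0`, no stable partition
exists. -/
theorem no_stable_partition_K9 (ε : ℝ) (hε : 0 < ε) :
    ¬ ∃ A B : Finset (Fin 9), A.Nonempty ∧ B.Nonempty ∧ Disjoint A B ∧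
      A ∪ B = Finset.univ ∧
      (∀ x ∈ A, (3 : ℝ) + ε ≤ deg (fun x y => if x = y then 0 else 1) A x) ∧
      (∀ x ∈ B, (3 : ℝ) + ε ≤ deg (fun x y => if x = y then 0 else 1) B x) := by
  rintro ⟨A, B, hA, hB, hd, hu, ha, hb⟩
  have h1 := card_ge ε hε A hA ha
  have h2 := card_ge ε hε B hB hb
  have : (A ∪ B).card = A.card + B.card := Finset.card_union_of_disjoint hd
  rw [hu] at this
  simp [Finset.card_univ] at this
  omega
end

section
/- Let G be a finite undirected weighted graph without loops, and let a, b : V(G) → ℝ≥0 satisfy d_G(x) ≥ a(x) + b(x) + 2·W_G(x) for every vertex x ∈ V(G). Suppose there is no meager partition of V(G), i.e. no partition (A, B) of V(G) such that the induced subgraph G(A) is a-meager and G(B) is b-meager. Then there exists a stable partition of V(G): a partition (A', B') with d_{A'}(x) ≥ a(x) for every x ∈ A' and d_{B'}(x) ≥ b(x) for every x ∈ B'. -/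
/-- The induced subgraph `G(X)` is `f`-meager if every nonempty `H ⊆ X`
contains a vertex `x` with `d_H(x) < f(x) + W_G(x)`. -/
def Meager {V : Type*} [Fintype V] [DecidableEq V] [Nontrivial V]
    (w : V → V → ℝ) (f : V → ℝ) (X : Finset V) : Prop :=
  ∀ H ⊆ X, H.Nonempty → ∃ x ∈ H, deg w H x < f x + maxW w x

section Aux

variable {V : Type*} [Fintype V] [DecidableEq V] [Nontrivial V]

lemma maxW_nonneg (w : V → V → ℝ) (hnonneg : ∀ x y, 0 ≤ w x y) (x : V) :
    0 ≤ maxW w x := by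
  obtain ⟨y, hy⟩ := exists_ne x
  exact (hnonneg x y).trans
    (Finset.le_sup' (w x) (Finset.mem_erase.mpr ⟨hy, Finset.mem_univ y⟩))

lemma le_maxW (w : V → V → ℝ) {x y : V} (h : y ≠ x) : w x y ≤ maxW w x :=
  Finset.le_sup' (w x) (Finset.mem_erase.mpr ⟨h, Finset.mem_univ y⟩)

lemma deg_mono (w : V → V → ℝ) (hnonneg : ∀ x y, 0 ≤ w x y) {X Y : Finset V}
    (h : X ⊆ Y) (x : V) : deg w X x ≤ deg w Y x :=
  Finset.sum_le_sum_of_subset_of_nonneg h (fun y _ _ => hnonneg x y)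

lemma deg_erase (w : V → V → ℝ) {X : Finset V} {v : V} (h : v ∈ X) (x : V) :
    deg w (X.erase v) x = deg w X x - w x v :=
  Finset.sum_erase_eq_sub h

lemma deg_compl (w : V → V → ℝ) (A : Finset V) (x : V) :
    deg w A x + deg w Aᶜ x = deg w Finset.univ x :=
  Finset.sum_add_sum_compl A (w x)

/-- The potential function used in the local-search argument. -/
noncomputable def Phi (w : V → V → ℝ) (a b : V → ℝ) (A : Finset V) : ℝ :=
  (∑ p ∈ A, deg w Aᶜ p) + ∑ p ∈ A, a p + ∑ p ∈ Aᶜ, b p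

lemma Phi_erase (w : V → V → ℝ) (hsymm : ∀ x y, w x y = w y x)
    (hloop : ∀ x, w x x = 0) (a b : V → ℝ) {A : Finset V} {x : V} (hx : x ∈ A) :
    Phi w a b (A.erase x) = Phi w a b A + deg w A x - deg w Aᶜ x - a x + b x := by
  have hxc : x ∉ Aᶜ := by simp [hx]
  have hce : (A.erase x)ᶜ = insert x Aᶜ := Finset.compl_erase
  have h1 : ∑ p ∈ A.erase x, deg w (insert x Aᶜ) p
      = ∑ p ∈ A.erase x, (w p x + deg w Aᶜ p) := by
    refine Finset.sum_congr rfl fun p _ => ?_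
    rw [deg, Finset.sum_insert hxc]
    rfl
  have h2 : ∑ p ∈ A.erase x, w p x = deg w A x := by
    have hsy : ∑ p ∈ A.erase x, w p x = ∑ p ∈ A.erase x, w x p :=
      Finset.sum_congr rfl fun p _ => hsymm p x
    have : (∑ p ∈ A.erase x, w x p) = deg w (A.erase x) x := rfl
    rw [hsy, this, deg_erase w hx x, hloop, sub_zero]
  unfold Phi
  rw [hce, h1, Finset.sum_add_distrib, h2,
    Finset.sum_erase_eq_sub (f := fun p => deg w Aᶜ p) hx,
    Finset.sum_erase_eq_sub (f := a) hx, Finset.sum_insert hxc]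
  ring

end Aux

/-- The first case of the proof of Theorem 1: if there is no meager partition
of `V(G)`, then there exists a stable partition of `V(G)`. -/
theorem no_meager_partition_to_stable_partition
    {V : Type*} [Fintype V] [DecidableEq V] [Nontrivial V]
    (w : V → V → ℝ)
    (hsymm : ∀ x y, w x y = w y x)
    (hnonneg : ∀ x y, 0 ≤ w x y)
    (hloop : ∀ x, w x x = 0)
    (a b : V → ℝ)
    (ha : ∀ x, 0 ≤ a x) (hb : ∀ x, 0 ≤ b x)
    (hdeg : ∀ x, a x + b x + 2 * maxW w x ≤ deg w Finset.univ x)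
    (hnomeager : ¬ ∃ A B : Finset V, A.Nonempty ∧ B.Nonempty ∧ Disjoint A B ∧
      A ∪ B = Finset.univ ∧ Meager w a A ∧ Meager w b B) :
    ∃ A' B' : Finset V, A'.Nonempty ∧ B'.Nonempty ∧ Disjoint A' B' ∧
      A' ∪ B' = Finset.univ ∧
      (∀ x ∈ A', a x ≤ deg w A' x) ∧ (∀ x ∈ B', b x ≤ deg w B' x) := by
  classical
  have hW : ∀ x, 0 ≤ maxW w x := maxW_nonneg w hnonneg
  -- Step 1: find disjoint nonempty "seed" sets.
  obtain ⟨Sg, Tg, hSgne, hTgne, hdisj, hSgood, hTgood⟩ :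
      ∃ S T : Finset V, S.Nonempty ∧ T.Nonempty ∧ Disjoint S T ∧
        (∀ x ∈ S, a x ≤ deg w S x) ∧ (∀ x ∈ T, b x ≤ deg w T x) := by
    -- the family of `a`-strong sets
    set Fa := Finset.univ.powerset.filter
      (fun X : Finset V => X.Nonempty ∧ ∀ x ∈ X, a x + maxW w x ≤ deg w X x) with hFa
    obtain ⟨v0, v1, hv01⟩ := exists_pair_ne V
    have hcos : ∀ x ∈ Finset.univ.erase v0,
        a x + maxW w x ≤ deg w (Finset.univ.erase v0) x := by
      intro x hx
      obtain ⟨hxv, -⟩ := Finset.mem_erase.mp hx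
      have hde := deg_erase w (Finset.mem_univ v0) x
      have hle : w x v0 ≤ maxW w x := le_maxW w (Ne.symm hxv)
      linarith [hdeg x, hb x, hW x]
    have hcosmem : Finset.univ.erase v0 ∈ Fa := by
      rw [hFa, Finset.mem_filter]
      exact ⟨Finset.mem_powerset.mpr (Finset.subset_univ _),
        ⟨v1, Finset.mem_erase.mpr ⟨Ne.symm hv01, Finset.mem_univ v1⟩⟩, hcos⟩
    obtain ⟨S, hSmem, hSmin⟩ := Fa.exists_min_image Finset.card ⟨_, hcosmem⟩
    rw [hFa, Finset.mem_filter] at hSmem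
    obtain ⟨-, hSne, hSstrong⟩ := hSmem
    obtain ⟨s, hs⟩ := hSne
    by_cases hcard : S.card = 1
    · -- S is a strong singleton: its vertex is isolated with `a = 0`.
      obtain ⟨u, hu⟩ := Finset.card_eq_one.mp hcard
      have hsu : s = u := by rw [hu] at hs; simpa using hs
      subst hsu
      have h0 : a s + maxW w s ≤ 0 := by
        have := hSstrong s hs
        rwa [hu, deg, Finset.sum_singleton, hloop] at this
      have hWs : maxW w s = 0 := le_antisymm (by linarith [ha s]) (hW s)
      have hws : ∀ y, w s y = 0 := by
        intro y
        by_cases hy : y = s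
        · rw [hy, hloop]
        · exact le_antisymm (by simpa [hWs] using le_maxW w hy) (hnonneg s y)
      obtain ⟨y0, hy0⟩ := exists_ne s
      refine ⟨{s}, Finset.univ.erase s, Finset.singleton_nonempty s,
        ⟨y0, Finset.mem_erase.mpr ⟨hy0, Finset.mem_univ y0⟩⟩,
        Finset.disjoint_singleton_left.mpr (Finset.notMem_erase s _), ?_, ?_⟩
      · intro x hx
        rw [Finset.mem_singleton] at hx
        subst hx
        rw [deg, Finset.sum_singleton, hloop]
        linarith [h0, hWs]
      · intro x hx
        obtain ⟨hxs, -⟩ := Finset.mem_erase.mp hx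
        have hde := deg_erase w (Finset.mem_univ s) x
        have : w x s = 0 := by rw [hsymm x s, hws x]
        linarith [hdeg x, ha x, hW x]
    · -- |S| ≥ 2
      have h1le : 1 ≤ S.card := Finset.card_pos.mpr ⟨s, hs⟩
      have h2 : 2 ≤ S.card := by omega
      have hLne : (S.erase s).Nonempty := by
        rw [← Finset.card_pos, Finset.card_erase_of_mem hs]; omega
      have hLmea : Meager w a (S.erase s) := by
        intro H hHL hHne
        by_contra hcon
        push_neg at hcon
        have hmem : H ∈ Fa := by
          rw [hFa, Finset.mem_filter]
          exact ⟨Finset.mem_powerset.mpr (Finset.subset_univ _), hHne, hcon⟩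
      -- contradiction with minimal cardinality
        have hmin := hSmin H hmem
        have hcle : H.card ≤ (S.erase s).card := Finset.card_le_card hHL
        rw [Finset.card_erase_of_mem hs] at hcle
        omega
      have hLc : s ∈ (S.erase s)ᶜ := by simp
      have hnm : ¬ Meager w b (S.erase s)ᶜ := by
        intro hm
        exact hnomeager ⟨S.erase s, (S.erase s)ᶜ, hLne, ⟨s, hLc⟩,
          disjoint_compl_right, Finset.union_compl _, hLmea, hm⟩
      rw [Meager] at hnm
      push_neg at hnm
      obtain ⟨T0, hT0sub, hT0ne, hT0strong⟩ := hnm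
      have hT0S : ∀ x ∈ T0, x ∈ S → x = s := by
        intro x hxT hxS
        have hmc := hT0sub hxT
        rw [Finset.mem_compl, Finset.mem_erase] at hmc
        push_neg at hmc
        by_contra hne
        exact (hmc hne) hxS
      by_cases hsT : s ∈ T0
      · by_cases hT' : (T0.erase s).Nonempty
        · -- seeds: S and T0 \ {s}
          refine ⟨S, T0.erase s, ⟨s, hs⟩, hT', ?_, ?_, ?_⟩
          · rw [Finset.disjoint_left]
            intro x hxS hxT
            obtain ⟨hxs, hxT0⟩ := Finset.mem_erase.mp hxT
            exact hxs (hT0S x hxT0 hxS)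
          · intro x hx
            linarith [hSstrong x hx, hW x]
          · intro x hx
            obtain ⟨hxs, hxT0⟩ := Finset.mem_erase.mp hx
            have hde := deg_erase w hsT x
            have hle : w x s ≤ maxW w x := le_maxW w (Ne.symm hxs)
            linarith [hT0strong x hxT0]
        · -- T0 = {s}: s is isolated with `b s = 0`; seeds: S \ {s} and {s}
          have hT0s : T0 = {s} := by
            rw [Finset.not_nonempty_iff_eq_empty] at hT'
            rcases (Finset.erase_eq_empty_iff T0 s).mp hT' with h | h
            · exact absurd (h ▸ hsT) (Finset.notMem_empty s)
            · exact h
          have h0 : b s + maxW w s ≤ 0 := by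
            have := hT0strong s hsT
            rwa [hT0s, deg, Finset.sum_singleton, hloop] at this
          have hWs : maxW w s = 0 := le_antisymm (by linarith [hb s]) (hW s)
          have hws : ∀ y, w s y = 0 := by
            intro y
            by_cases hy : y = s
            · rw [hy, hloop]
            · exact le_antisymm (by simpa [hWs] using le_maxW w hy) (hnonneg s y)
          refine ⟨S.erase s, {s}, hLne, Finset.singleton_nonempty s,
            Finset.disjoint_singleton_right.mpr (Finset.notMem_erase s S), ?_, ?_⟩
          · intro x hx
            obtain ⟨hxs, hxS⟩ := Finset.mem_erase.mp hx
            have hde := deg_erase w hs x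
            have hle : w x s ≤ maxW w x := le_maxW w (Ne.symm hxs)
            linarith [hSstrong x hxS, hW x]
          · intro x hx
            rw [Finset.mem_singleton] at hx
            subst hx
            rw [deg, Finset.sum_singleton, hloop]
            linarith [h0, hWs]
      · -- seeds: S and T0 (disjoint)
        refine ⟨S, T0, ⟨s, hs⟩, hT0ne, ?_, ?_, ?_⟩
        · rw [Finset.disjoint_left]
          intro x hxS hxT
          exact hsT ((hT0S x hxT hxS) ▸ hxT)
        · intro x hx
          linarith [hSstrong x hx, hW x]
        · intro x hx
          linarith [hT0strong x hx, hW x]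
  -- Step 2: minimize the potential over partitions extending the seeds.
  set F := Finset.univ.powerset.filter
    (fun X : Finset V => Sg ⊆ X ∧ Disjoint X Tg) with hF
  have hSgF : Sg ∈ F := by
    rw [hF, Finset.mem_filter]
    exact ⟨Finset.mem_powerset.mpr (Finset.subset_univ _), subset_rfl, hdisj⟩
  obtain ⟨A, hAF, hmin⟩ := F.exists_min_image (Phi w a b) ⟨Sg, hSgF⟩
  rw [hF, Finset.mem_filter] at hAF
  obtain ⟨-, hSA, hAT⟩ := hAF
  have hTAc : Tg ⊆ Aᶜ := fun x hx =>
    Finset.mem_compl.mpr (fun hxA => Finset.disjoint_left.mp hAT hxA hx)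
  refine ⟨A, Aᶜ, hSgne.mono hSA, hTgne.mono hTAc, disjoint_compl_right,
    Finset.union_compl A, ?_, ?_⟩
  · -- every vertex of A has degree at least `a` in A
    intro x hx
    by_contra hlt
    push_neg at hlt
    have hxS : x ∉ Sg := fun h =>
      absurd ((hSgood x h).trans (deg_mono w hnonneg hSA x)) (not_le.mpr hlt)
    have hA'F : A.erase x ∈ F := by
      rw [hF, Finset.mem_filter]
      exact ⟨Finset.mem_powerset.mpr (Finset.subset_univ _),
        Finset.subset_erase.mpr ⟨hSA, hxS⟩,
        Finset.disjoint_of_subset_left (Finset.erase_subset x A) hAT⟩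
    have h1 := hmin _ hA'F
    have h2 := Phi_erase w hsymm hloop a b hx
    have h3 := deg_compl w A x
    linarith [hdeg x, hW x]
  · -- every vertex of Aᶜ has degree at least `b` in Aᶜ
    intro x hx
    have hxA : x ∉ A := Finset.mem_compl.mp hx
    by_contra hlt
    push_neg at hlt
    have hxT : x ∉ Tg := fun h =>
      absurd ((hTgood x h).trans (deg_mono w hnonneg hTAc x)) (not_le.mpr hlt)
    have hA'F : insert x A ∈ F := by
      rw [hF, Finset.mem_filter]
      exact ⟨Finset.mem_powerset.mpr (Finset.subset_univ _),
        hSA.trans (Finset.subset_insert x A),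
        Finset.disjoint_insert_left.mpr ⟨hxT, hAT⟩⟩
    have h1 := hmin _ hA'F
    have h2 := Phi_erase w hsymm hloop a b (Finset.mem_insert_self x A)
    rw [Finset.erase_insert hxA] at h2
    have hdegi : deg w (insert x A) x = deg w A x := by
      rw [deg, Finset.sum_insert hxA, hloop, zero_add]
      rfl
    have hdegc : deg w (insert x A)ᶜ x = deg w Aᶜ x := by
      rw [Finset.compl_insert, deg_erase w hx x, hloop, sub_zero]
    rw [hdegi, hdegc] at h2
    have h3 := deg_compl w A x
    linarith [hdeg x, hW x]
end

section
/- Let G be a finite undirected weighted graph without loops, and let a, b : V(G) → ℝ≥0 satisfy d_G(x) ≥ a(x) + b(x) + 2·W_G(x) for every vertex x ∈ V(G). If (A, B) is a meager partition of V(G) (i.e. G(A) is a-meager and G(B) is b-meager), then |A| ≥ 2 and |B| ≥ 2. -/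
lemma aux_card_ge_two {V : Type*} [Fintype V] [DecidableEq V] [Nontrivial V]
    (w : V → V → ℝ) (a b : V → ℝ)
    (ha : ∀ x, 0 ≤ a x)
    (hdeg : ∀ x, a x + b x + 2 * maxW w x ≤ deg w Finset.univ x)
    (A B : Finset V)
    (hA : A.Nonempty) (hB : B.Nonempty) (hAB : Disjoint A B)
    (hunion : A ∪ B = Finset.univ)
    (hmB : Meager w b B) :
    2 ≤ A.card := by
  by_contra h
  push_neg at h
  have h1 : A.card = 1 := by
    have := hA.card_pos
    omega
  obtain ⟨x, hx⟩ := Finset.card_eq_one.mp h1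
  obtain ⟨y, hyB, hlt⟩ := hmB B (le_refl B) hB
  have hxy : x ≠ y := by
    rintro rfl
    exact (Finset.disjoint_left.mp hAB (hx ▸ Finset.mem_singleton_self x)) hyB
  have hsum : deg w Finset.univ y = w y x + deg w B y := by
    rw [← hunion, deg, Finset.sum_union hAB, hx, Finset.sum_singleton]; rfl
  have hwle : w y x ≤ maxW w y :=
    Finset.le_sup' (w y) (Finset.mem_erase.mpr ⟨hxy, Finset.mem_univ x⟩)
  have := hdeg y
  have := ha y
  linarith

/-- In the second case of the proof of Theorem 1: any meager partition `(A,B)`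
of `V(G)` satisfies `|A| ≥ 2` and `|B| ≥ 2`. -/
theorem meager_partition_parts_card_ge_two
    {V : Type*} [Fintype V] [DecidableEq V] [Nontrivial V]
    (w : V → V → ℝ)
    (hsymm : ∀ x y, w x y = w y x)
    (hnonneg : ∀ x y, 0 ≤ w x y)
    (hloop : ∀ x, w x x = 0)
    (a b : V → ℝ)
    (ha : ∀ x, 0 ≤ a x) (hb : ∀ x, 0 ≤ b x)
    (hdeg : ∀ x, a x + b x + 2 * maxW w x ≤ deg w Finset.univ x)
    (A B : Finset V)
    (hA : A.Nonempty) (hB : B.Nonempty) (hAB : Disjoint A B)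
    (hunion : A ∪ B = Finset.univ)
    (hmA : Meager w a A) (hmB : Meager w b B) :
    2 ≤ A.card ∧ 2 ≤ B.card := by
  refine ⟨aux_card_ge_two w a b ha hdeg A B hA hB hAB hunion hmB,
    aux_card_ge_two w b a hb (fun x => by linarith [hdeg x]) B A hB hA hAB.symm
      (by rw [Finset.union_comm]; exact hunion) hmA⟩
end
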